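/- arXiv:1410.5235 — 3 statements merged into one kernel-verified Lean document; each statement's English description precedes it below -/
import Mathlib

section
/- Under the assumptions of the saturation-threshold Hawkes model (φ_i γ-Lipschitz, nondecreasing, [0,1]-valued, and sup_i ∑_j |W_{j→i}| K_{j→i} < ∞), the sequence μ_i(0) = α_i(0), μ_i(k) = α_i(k) − α_i(k−1) for k ≥ 1 defines a probability distribution on ℕ, i.e. μ_i(k) ≥ 0 for all k and ∑_{k≥0} μ_i(k) = 1. -/
open Set

/-- In the saturation-threshold model, the Kalikow weights
μ_i(0) = α_i(0), μ_i(k) = α_i(k) − α_i(k−1) form a probability distribution on ℕ. -/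
theorem stmt1 {I : Type*} [Countable I] (γ : ℝ) (hγ : 0 ≤ γ)
    (φ : ℝ → ℝ) (hφLip : ∀ x y : ℝ, |φ x - φ y| ≤ γ * |x - y|)
    (hφmono : Monotone φ) (hφ01 : ∀ x, φ x ∈ Set.Icc (0 : ℝ) 1)
    (W K : I → ℝ) (hK : ∀ j, 0 < K j)
    (hsum : Summable (fun j => |W j| * K j))
    (V : ℕ → Finset I) (hV0 : V 0 = ∅) (hVmono : Monotone V)
    (hVcov : ∀ j, W j ≠ 0 → ∃ k, j ∈ V k)
    (Stilde : Set (I → ℕ)) (hS : Stilde = {η | ∀ j, (η j : ℝ) ≤ K j})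
    (D : ℕ → (I → ℕ) → Set (I → ℕ))
    (hD : ∀ k ζ, D k ζ = {η ∈ Stilde | ∀ j ∈ V k, η j = ζ j})
    (r1 r0 : ℕ → (I → ℕ) → ℝ)
    (hr1 : ∀ k ζ, r1 k ζ = sInf ((fun η : I → ℕ => φ (∑' j, W j * (η j : ℝ))) '' D k ζ))
    (hr0 : ∀ k ζ, r0 k ζ = sInf ((fun η : I → ℕ => 1 - φ (∑' j, W j * (η j : ℝ))) '' D k ζ))
    (α : ℕ → ℝ) (hα : ∀ k, α k = sInf ((fun ζ => r1 k ζ + r0 k ζ) '' Stilde))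
    (μ : ℕ → ℝ) (hμ0 : μ 0 = α 0) (hμ : ∀ k, 1 ≤ k → μ k = α k - α (k - 1)) :
    (∀ k, 0 ≤ μ k) ∧ HasSum μ 1 := by
  classical
  set f : I → ℝ := fun j => |W j| * K j with hfdef
  have hf0 : ∀ j, 0 ≤ f j := fun j => mul_nonneg (abs_nonneg _) (hK j).le
  have hzero : (fun _ : I => (0 : ℕ)) ∈ Stilde := by
    rw [hS]; intro j; simpa using (hK j).le
  have hmem : ∀ k, ∀ ζ ∈ Stilde, ζ ∈ D k ζ := by
    intro k ζ hζ; rw [hD]; exact ⟨hζ, fun j _ => rfl⟩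
  have hDsub : ∀ k ζ, D k ζ ⊆ Stilde := by
    intro k ζ η hη; rw [hD] at hη; exact hη.1
  have hbd : ∀ η ∈ Stilde, ∀ j, ‖W j * (η j : ℝ)‖ ≤ f j := by
    intro η hη j
    rw [hS] at hη
    rw [Real.norm_eq_abs, abs_mul, Nat.abs_cast]
    exact mul_le_mul_of_nonneg_left (hη j) (abs_nonneg _)
  have hsummS : ∀ η ∈ Stilde, Summable (fun j => W j * (η j : ℝ)) := by
    intro η hη
    exact Summable.of_norm_bounded hsum (hbd η hη)
  have hφ0 : ∀ x, 0 ≤ φ x := fun x => (hφ01 x).1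
  have hφ1 : ∀ x, φ x ≤ 1 := fun x => (hφ01 x).2
  -- nonnegativity of r1, r0
  have hr1nonneg : ∀ k ζ, 0 ≤ r1 k ζ := by
    intro k ζ; rw [hr1]
    exact Real.sInf_nonneg (by rintro x ⟨η, -, rfl⟩; exact hφ0 _)
  have hr0nonneg : ∀ k ζ, 0 ≤ r0 k ζ := by
    intro k ζ; rw [hr0]
    exact Real.sInf_nonneg (by rintro x ⟨η, -, rfl⟩; exact sub_nonneg.2 (hφ1 _))
  -- bddBelow facts
  have hbdd1 : ∀ k ζ, BddBelow ((fun η : I → ℕ => φ (∑' j, W j * (η j : ℝ))) '' D k ζ) :=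
    fun k ζ => ⟨0, by rintro x ⟨η, -, rfl⟩; exact hφ0 _⟩
  have hbdd0 : ∀ k ζ, BddBelow ((fun η : I → ℕ => 1 - φ (∑' j, W j * (η j : ℝ))) '' D k ζ) :=
    fun k ζ => ⟨0, by rintro x ⟨η, -, rfl⟩; exact sub_nonneg.2 (hφ1 _)⟩
  have hbddα : ∀ k, BddBelow ((fun ζ => r1 k ζ + r0 k ζ) '' Stilde) :=
    fun k => ⟨0, by rintro x ⟨ζ, -, rfl⟩; exact add_nonneg (hr1nonneg k ζ) (hr0nonneg k ζ)⟩
  -- the tail sums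
  set t : ℕ → ℝ := fun k => ∑' (j : ↑((V k : Set I))ᶜ), f ↑j with htdef
  have ht0 : ∀ k, 0 ≤ t k := by
    intro k
    exact tsum_nonneg (fun j => hf0 _)
  -- key oscillation estimate
  have key : ∀ k (ζ : I → ℕ), ∀ η ∈ D k ζ, ∀ η' ∈ D k ζ,
      |(∑' j, W j * (η j : ℝ)) - ∑' j, W j * (η' j : ℝ)| ≤ t k := by
    intro k ζ η hη η' hη'
    have h1 := hsummS η (hDsub k ζ hη)
    have h2 := hsummS η' (hDsub k ζ hη')
    have hdiff : (∑' j, W j * (η j : ℝ)) - ∑' j, W j * (η' j : ℝ)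
        = ∑' j, (W j * (η j : ℝ) - W j * (η' j : ℝ)) := (Summable.tsum_sub h1 h2).symm
    have hsupp : Function.support (fun j => W j * (η j : ℝ) - W j * (η' j : ℝ))
        ⊆ ((V k : Set I))ᶜ := by
      intro j hj
      simp only [Function.mem_support] at hj
      intro hjV
      rw [hD] at hη hη'
      apply hj
      rw [hη.2 j hjV, hη'.2 j hjV]
      ring
    have hterm : ∀ j, |W j * (η j : ℝ) - W j * (η' j : ℝ)| ≤ f j := by
      intro j
      rw [hS] at *
      have hη1 : (η j : ℝ) ≤ K j := (hDsub k ζ hη) j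
      have hη2 : (η' j : ℝ) ≤ K j := (hDsub k ζ hη') j
      have h01 : (0 : ℝ) ≤ (η j : ℝ) := Nat.cast_nonneg _
      have h02 : (0 : ℝ) ≤ (η' j : ℝ) := Nat.cast_nonneg _
      rw [← mul_sub, abs_mul]
      refine mul_le_mul_of_nonneg_left ?_ (abs_nonneg _)
      rw [abs_sub_le_iff]
      constructor <;> linarith
    have hsub : Summable (fun j => W j * (η j : ℝ) - W j * (η' j : ℝ)) := h1.sub h2
    rw [hdiff, ← tsum_subtype_eq_of_support_subset hsupp]
    calc |∑' (j : ↑((V k : Set I))ᶜ), (W ↑j * ((η ↑j : ℕ) : ℝ) - W ↑j * ((η' ↑j : ℕ) : ℝ))|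
        ≤ ∑' (j : ↑((V k : Set I))ᶜ), |W ↑j * ((η ↑j : ℕ) : ℝ) - W ↑j * ((η' ↑j : ℕ) : ℝ)| := by
          simpa only [Real.norm_eq_abs] using
            norm_tsum_le_tsum_norm (f := fun j : ↑((V k : Set I))ᶜ =>
              W ↑j * ((η ↑j : ℕ) : ℝ) - W ↑j * ((η' ↑j : ℕ) : ℝ))
            (by exact hsub.abs.subtype ((V k : Set I))ᶜ)
      _ ≤ t k := by
          refine Summable.tsum_le_tsum (fun j => hterm ↑j) ?_ ?_
          · exact hsub.abs.subtype ((V k : Set I))ᶜ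
          · exact hsum.subtype _
  -- α k ≤ 1
  have hαle1 : ∀ k, α k ≤ 1 := by
    intro k
    rw [hα]
    have h1 : r1 k (fun _ => 0) ≤ φ (∑' j, W j * ((0 : ℕ) : ℝ)) := by
      rw [hr1]
      exact csInf_le (hbdd1 _ _) ⟨_, hmem k _ hzero, rfl⟩
    have h0 : r0 k (fun _ => 0) ≤ 1 - φ (∑' j, W j * ((0 : ℕ) : ℝ)) := by
      rw [hr0]
      exact csInf_le (hbdd0 _ _) ⟨_, hmem k _ hzero, rfl⟩
    calc sInf ((fun ζ => r1 k ζ + r0 k ζ) '' Stilde)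
        ≤ r1 k (fun _ => 0) + r0 k (fun _ => 0) := csInf_le (hbddα k) ⟨_, hzero, rfl⟩
      _ ≤ 1 := by linarith
  -- lower bound: 1 - γ * t k ≤ α k
  have hαlow : ∀ k, 1 - γ * t k ≤ α k := by
    intro k
    rw [hα]
    refine le_csInf ⟨_, ⟨_, hzero, rfl⟩⟩ ?_
    rintro x ⟨ζ, hζ, rfl⟩
    show 1 - γ * t k ≤ r1 k ζ + r0 k ζ
    have h1 : 1 - γ * t k - r0 k ζ ≤ r1 k ζ := by
      rw [hr1]
      refine le_csInf ⟨_, ⟨ζ, hmem k ζ hζ, rfl⟩⟩ ?_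
      rintro x ⟨η, hη, rfl⟩
      show 1 - γ * t k - r0 k ζ ≤ φ (∑' j, W j * (η j : ℝ))
      have h0 : 1 - γ * t k - φ (∑' j, W j * (η j : ℝ)) ≤ r0 k ζ := by
        rw [hr0]
        refine le_csInf ⟨_, ⟨ζ, hmem k ζ hζ, rfl⟩⟩ ?_
        rintro x ⟨η', hη', rfl⟩
        show 1 - γ * t k - φ (∑' j, W j * (η j : ℝ)) ≤ 1 - φ (∑' j, W j * (η' j : ℝ))
        have hlip := hφLip (∑' j, W j * (η j : ℝ)) (∑' j, W j * (η' j : ℝ))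
        have hkey := key k ζ η hη η' hη'
        have hm : γ * |(∑' j, W j * (η j : ℝ)) - ∑' j, W j * (η' j : ℝ)| ≤ γ * t k :=
          mul_le_mul_of_nonneg_left hkey hγ
        have habs := abs_le.1 (hlip.trans hm)
        linarith [habs.1, habs.2]
      linarith
    linarith
  -- α is monotone
  have hαmono : Monotone α := by
    refine monotone_nat_of_le_succ (fun k => ?_)
    rw [hα k, hα (k + 1)]
    refine le_csInf ⟨_, ⟨_, hzero, rfl⟩⟩ ?_
    rintro x ⟨ζ, hζ, rfl⟩
    have hDsub' : D (k + 1) ζ ⊆ D k ζ := by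
      intro η hη
      rw [hD] at *
      exact ⟨hη.1, fun j hj => hη.2 j (hVmono (Nat.le_succ k) hj)⟩
    have h1 : r1 k ζ ≤ r1 (k + 1) ζ := by
      rw [hr1 k, hr1 (k + 1)]
      exact csInf_le_csInf (hbdd1 k ζ) ⟨_, ⟨ζ, hmem (k + 1) ζ hζ, rfl⟩⟩
        (Set.image_mono hDsub')
    have h0 : r0 k ζ ≤ r0 (k + 1) ζ := by
      rw [hr0 k, hr0 (k + 1)]
      exact csInf_le_csInf (hbdd0 k ζ) ⟨_, ⟨ζ, hmem (k + 1) ζ hζ, rfl⟩⟩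
        (Set.image_mono hDsub')
    calc sInf ((fun ζ => r1 k ζ + r0 k ζ) '' Stilde)
        ≤ r1 k ζ + r0 k ζ := csInf_le (hbddα k) ⟨ζ, hζ, rfl⟩
      _ ≤ r1 (k + 1) ζ + r0 (k + 1) ζ := by linarith
  -- tail sums tend to zero
  have hpartial : Filter.Tendsto (fun k => ∑ j ∈ V k, f j) Filter.atTop (nhds (∑' j, f j)) := by
    rw [Metric.tendsto_atTop]
    intro ε hε
    have hhs : Filter.Tendsto (fun s : Finset I => ∑ j ∈ s, f j) Filter.atTop
        (nhds (∑' j, f j)) := hsum.hasSum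
    rw [Metric.tendsto_nhds] at hhs
    obtain ⟨s₀, hs₀⟩ := Filter.eventually_atTop.1 (hhs ε hε)
    set s₁ : Finset I := s₀.filter (fun j => W j ≠ 0) with hs₁def
    have hgex : ∀ j ∈ s₁, ∃ m, j ∈ V m := by
      intro j hj
      exact hVcov j (Finset.mem_filter.1 hj).2
    choose g hg using hgex
    set N : ℕ := s₁.attach.sup (fun j => g ↑j j.2) with hNdef
    refine ⟨N, fun k hk => ?_⟩
    have hs₁sub : s₁ ⊆ V k := by
      intro j hj
      have : g j hj ≤ N := Finset.le_sup (f := fun j : {x // x ∈ s₁} => g ↑j j.2)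
        (Finset.mem_attach _ ⟨j, hj⟩)
      exact hVmono (this.trans hk) (hg j hj)
    have heq : ∑ j ∈ V k, f j = ∑ j ∈ V k ∪ s₀, f j := by
      refine Finset.sum_subset Finset.subset_union_left ?_
      intro j hj hjk
      have hjs₀ : j ∈ s₀ := (Finset.mem_union.1 hj).resolve_left hjk
      have hW : W j = 0 := by
        by_contra hW
        exact hjk (hs₁sub (Finset.mem_filter.2 ⟨hjs₀, hW⟩))
      simp [hfdef, hW]
    rw [heq]
    exact hs₀ _ Finset.subset_union_right
  have htlim : Filter.Tendsto t Filter.atTop (nhds 0) := by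
    have heq : ∀ k, t k = (∑' j, f j) - ∑ j ∈ V k, f j := by
      intro k
      have := Summable.sum_add_tsum_compl (f := f) (s := V k) hsum
      rw [htdef]
      linarith [this]
    have : Filter.Tendsto (fun k => (∑' j, f j) - ∑ j ∈ V k, f j) Filter.atTop
        (nhds ((∑' j, f j) - ∑' j, f j)) := Filter.Tendsto.sub tendsto_const_nhds hpartial
    rw [sub_self] at this
    exact this.congr (fun k => (heq k).symm)
  -- α tends to 1
  have hαlim : Filter.Tendsto α Filter.atTop (nhds 1) := by
    have hlow : Filter.Tendsto (fun k => 1 - γ * t k) Filter.atTop (nhds 1) := by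
      have : Filter.Tendsto (fun k => 1 - γ * t k) Filter.atTop (nhds (1 - γ * 0)) :=
        Filter.Tendsto.sub tendsto_const_nhds (htlim.const_mul γ)
      simpa using this
    exact tendsto_of_tendsto_of_tendsto_of_le_of_le hlow tendsto_const_nhds
      (fun k => hαlow k) (fun k => hαle1 k)
  -- μ nonneg
  have hμnonneg : ∀ k, 0 ≤ μ k := by
    intro k
    rcases Nat.eq_zero_or_pos k with hk | hk
    · subst hk
      rw [hμ0, hα 0]
      exact Real.sInf_nonneg (by
        rintro x ⟨ζ, hζ, rfl⟩
        exact add_nonneg (hr1nonneg 0 ζ) (hr0nonneg 0 ζ))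
    · rw [hμ k hk]
      have := hαmono (Nat.sub_le k 1)
      linarith
  refine ⟨hμnonneg, ?_⟩
  -- partial sums telescope
  have hpart : ∀ n, ∑ i ∈ Finset.range (n + 1), μ i = α n := by
    intro n
    induction n with
    | zero => simp [hμ0]
    | succ n ih =>
      rw [Finset.sum_range_succ, ih, hμ (n + 1) (by omega)]
      simp
  rw [hasSum_iff_tendsto_nat_of_nonneg hμnonneg]
  have : Filter.Tendsto (fun n => ∑ i ∈ Finset.range (n + 1), μ i) Filter.atTop (nhds 1) :=
    hαlim.congr (fun n => (hpart n).symm)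
  exact (Filter.tendsto_add_atTop_iff_nat 1).1 this
end

section
/- With the notation of the Kalikow decomposition for the saturation-threshold model, for every k ≥ 1 the weight μ_i(k) satisfies μ_i(k) ≤ γ ∑_{j ∈ V_i(k) \ V_i(k−1)} |W_{j→i}| K_{j→i}. -/
open Set

/-- In the Kalikow decomposition for the saturation-threshold model,
μ_i(k) ≤ γ ∑_{j ∈ V_i(k) \ V_i(k−1)} |W_{j→i}| K_{j→i} for every k ≥ 1. -/
theorem stmt2 {I : Type*} [Countable I] [DecidableEq I] (γ : ℝ) (hγ : 0 ≤ γ)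
    (φ : ℝ → ℝ) (hφLip : ∀ x y : ℝ, |φ x - φ y| ≤ γ * |x - y|)
    (hφmono : Monotone φ) (hφ01 : ∀ x, φ x ∈ Set.Icc (0 : ℝ) 1)
    (W K : I → ℝ) (hK : ∀ j, 0 < K j)
    (hsum : Summable (fun j => |W j| * K j))
    (V : ℕ → Finset I) (hV0 : V 0 = ∅) (hVmono : Monotone V)
    (hVcov : ∀ j, W j ≠ 0 → ∃ k, j ∈ V k)
    (Stilde : Set (I → ℕ)) (hS : Stilde = {η | ∀ j, (η j : ℝ) ≤ K j})
    (D : ℕ → (I → ℕ) → Set (I → ℕ))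
    (hD : ∀ k ζ, D k ζ = {η ∈ Stilde | ∀ j ∈ V k, η j = ζ j})
    (r1 r0 : ℕ → (I → ℕ) → ℝ)
    (hr1 : ∀ k ζ, r1 k ζ = sInf ((fun η : I → ℕ => φ (∑' j, W j * (η j : ℝ))) '' D k ζ))
    (hr0 : ∀ k ζ, r0 k ζ = sInf ((fun η : I → ℕ => 1 - φ (∑' j, W j * (η j : ℝ))) '' D k ζ))
    (α : ℕ → ℝ) (hα : ∀ k, α k = sInf ((fun ζ => r1 k ζ + r0 k ζ) '' Stilde))
    (μ : ℕ → ℝ) (hμ0 : μ 0 = α 0) (hμ : ∀ k, 1 ≤ k → μ k = α k - α (k - 1)) :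
    ∀ k, 1 ≤ k → μ k ≤ γ * ∑ j ∈ V k \ V (k - 1), |W j| * K j := by
  intro k hk
  set m := k - 1 with hm
  have hVsub : V m ⊆ V k := hVmono (Nat.sub_le k 1)
  set S := ∑ j ∈ V k \ V m, |W j| * K j with hSdef
  have hS0 : 0 ≤ S :=
    Finset.sum_nonneg fun j _ => mul_nonneg (abs_nonneg _) (hK j).le
  -- membership characterizations
  have hmemS : ∀ η : I → ℕ, η ∈ Stilde ↔ ∀ j, (η j : ℝ) ≤ K j := by
    intro η; rw [hS]; rfl
  have hmemD : ∀ (n : ℕ) (ζ η : I → ℕ),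
      η ∈ D n ζ ↔ η ∈ Stilde ∧ ∀ j ∈ V n, η j = ζ j := by
    intro n ζ η; rw [hD]; rfl
  -- summability
  have hsummable : ∀ η : I → ℕ, η ∈ Stilde → Summable (fun j => W j * (η j : ℝ)) := by
    intro η hη
    rw [hmemS] at hη
    refine Summable.of_norm_bounded hsum fun j => ?_
    rw [Real.norm_eq_abs, abs_mul, Nat.abs_cast]
    exact mul_le_mul_of_nonneg_left (hη j) (abs_nonneg _)
  -- lower bounds
  have himg1_lb : ∀ (n : ℕ) (ζ : I → ℕ),
      ∀ y ∈ (fun η : I → ℕ => φ (∑' j, W j * (η j : ℝ))) '' D n ζ, (0:ℝ) ≤ y := by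
    rintro n ζ y ⟨η, -, rfl⟩; exact (hφ01 _).1
  have himg0_lb : ∀ (n : ℕ) (ζ : I → ℕ),
      ∀ y ∈ (fun η : I → ℕ => 1 - φ (∑' j, W j * (η j : ℝ))) '' D n ζ, (0:ℝ) ≤ y := by
    rintro n ζ y ⟨η, -, rfl⟩; simpa using (hφ01 _).2
  have hr1nonneg : ∀ (n : ℕ) (ζ : I → ℕ), 0 ≤ r1 n ζ := by
    intro n ζ; rw [hr1]; exact Real.sInf_nonneg (himg1_lb n ζ)
  have hr0nonneg : ∀ (n : ℕ) (ζ : I → ℕ), 0 ≤ r0 n ζ := by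
    intro n ζ; rw [hr0]; exact Real.sInf_nonneg (himg0_lb n ζ)
  -- main inequality
  have key : α k ≤ α m + γ * S := by
    refine le_of_forall_pos_le_add fun ε hε => ?_
    have hε3 : 0 < ε / 3 := by positivity
    -- near-minimizer ζ of α m
    have hStilde_ne : Stilde.Nonempty := by
      refine ⟨fun _ => 0, ?_⟩
      rw [hmemS]; intro j; simpa using (hK j).le
    obtain ⟨y, ⟨ζ, hζS, rfl⟩, hy⟩ :=
      Real.lt_sInf_add_pos (hStilde_ne.image _) hε3
    rw [← hα m] at hy
    -- ζ ∈ D m ζ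
    have hζD : ζ ∈ D m ζ := (hmemD m ζ ζ).2 ⟨hζS, fun j _ => rfl⟩
    have hDne : (D m ζ).Nonempty := ⟨ζ, hζD⟩
    -- near minimizer η of r1 m ζ
    obtain ⟨y1, ⟨η, hηD, rfl⟩, hy1⟩ :=
      Real.lt_sInf_add_pos (hDne.image (fun η : I → ℕ => φ (∑' j, W j * (η j : ℝ)))) hε3
    rw [← hr1 m ζ] at hy1
    -- near minimizer η̃ of r0 m ζ
    obtain ⟨y0, ⟨ηt, hηtD, rfl⟩, hy0⟩ :=
      Real.lt_sInf_add_pos (hDne.image (fun η : I → ℕ => 1 - φ (∑' j, W j * (η j : ℝ)))) hε3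
    rw [← hr0 m ζ] at hy0
    rw [hmemD] at hηD hηtD
    obtain ⟨hηS, hηV⟩ := hηD
    obtain ⟨hηtS, hηtV⟩ := hηtD
    -- the modified configuration
    set η' : I → ℕ := fun j => if j ∈ V k then η j else ηt j with hη'def
    have hη'S : η' ∈ Stilde := by
      rw [hmemS] at *
      intro j
      by_cases h : j ∈ V k <;> simp only [hη'def, h, if_true, if_false]
      · exact hηS j
      · exact hηtS j
    have hη'D : η' ∈ D k η := by
      refine (hmemD k η η').2 ⟨hη'S, fun j hj => ?_⟩
      simp only [hη'def, hj, if_true]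
    have hηD' : η ∈ D k η := (hmemD k η η).2 ⟨hηS, fun j _ => rfl⟩
    -- tsum difference bound
    have hsum' := hsummable η' hη'S
    have hsumt := hsummable ηt hηtS
    have hdiffsum : (∑' j, W j * (η' j : ℝ)) - (∑' j, W j * (ηt j : ℝ))
        = ∑ j ∈ V k \ V m, (W j * (η' j : ℝ) - W j * (ηt j : ℝ)) := by
      rw [← Summable.tsum_sub hsum' hsumt]
      refine tsum_eq_sum fun j hj => ?_
      simp only [Finset.mem_sdiff, not_and, not_not] at hj
      by_cases h : j ∈ V k
      · have hjm : j ∈ V m := hj h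
        have : η' j = ηt j := by
          simp only [hη'def, h, if_true]
          rw [hηV j hjm, hηtV j hjm]
        rw [this]; ring
      · have : η' j = ηt j := by simp only [hη'def, h, if_false]
        rw [this]; ring
    have habs : |(∑' j, W j * (η' j : ℝ)) - (∑' j, W j * (ηt j : ℝ))| ≤ S := by
      rw [hdiffsum]
      refine (Finset.abs_sum_le_sum_abs _ _).trans (Finset.sum_le_sum fun j _ => ?_)
      rw [← mul_sub, abs_mul]
      refine mul_le_mul_of_nonneg_left ?_ (abs_nonneg _)
      rw [hmemS] at hη'S hηtS
      rw [abs_sub_le_iff]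
      constructor
      · have := hη'S j
        have h2 : (0:ℝ) ≤ (ηt j : ℝ) := Nat.cast_nonneg _
        linarith
      · have := hηtS j
        have h2 : (0:ℝ) ≤ (η' j : ℝ) := Nat.cast_nonneg _
        linarith
    have hLip : 1 - φ (∑' j, W j * (η' j : ℝ)) ≤ 1 - φ (∑' j, W j * (ηt j : ℝ)) + γ * S := by
      have h1 := hφLip (∑' j, W j * (ηt j : ℝ)) (∑' j, W j * (η' j : ℝ))
      have h2 : |(∑' j, W j * (ηt j : ℝ)) - (∑' j, W j * (η' j : ℝ))| ≤ S := by
        rw [abs_sub_comm]; exact habs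
      have h3 : γ * |(∑' j, W j * (ηt j : ℝ)) - (∑' j, W j * (η' j : ℝ))| ≤ γ * S :=
        mul_le_mul_of_nonneg_left h2 hγ
      have h4 := (abs_le.mp (h1.trans h3)).2
      linarith
    -- assemble
    have hαk : α k ≤ r1 k η + r0 k η := by
      rw [hα k]
      exact csInf_le ⟨0, fun y ⟨ζ', _, h⟩ => h ▸ add_nonneg (hr1nonneg k ζ') (hr0nonneg k ζ')⟩
        ⟨η, hηS, rfl⟩
    have hr1k : r1 k η ≤ φ (∑' j, W j * (η j : ℝ)) := by
      rw [hr1 k η]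
      exact csInf_le ⟨0, himg1_lb k η⟩ ⟨η, hηD', rfl⟩
    have hr0k : r0 k η ≤ 1 - φ (∑' j, W j * (η' j : ℝ)) := by
      rw [hr0 k η]
      exact csInf_le ⟨0, himg0_lb k η⟩ ⟨η', hη'D, rfl⟩
    linarith
  rw [hμ k hk]
  have : α k - α m ≤ γ * S := sub_le_iff_le_add'.mpr key
  exact this
end

section
/- In the second example, with V_{(i₁,i₂)}(k) = {(j₁, i₂−1) : 1 ≤ |j₁−i₁| ≤ k}, weights W_{(j₁,j₂)→(i₁,i₂)} = W|j₁−i₁|^{−β} 1[j₂=i₂−1, j₁≠i₁], and g(s) = e^{−as}, the series ∑_{k≥2} (kΛ(2k+1)+1)( ∑_{l=1}^{k−1} (Λ/l^β) e^{−ak}(e^a−1) + (Λ/k^β)(1−e^{−ak}) ) converges if and only if β > 3. -/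
open Real

private lemma stmt12_aux_one_le_rpow {x y : ℝ} (hx : 1 ≤ x) (hy : 0 ≤ y) : 1 ≤ x ^ y :=
  Real.one_le_rpow hx hy

set_option maxHeartbeats 1000000 in
/-- In the second example, the series
∑_{k≥2} (kΛ(2k+1)+1)( ∑_{l=1}^{k−1} (Λ/l^β) e^{−ak}(e^a−1) + (Λ/k^β)(1−e^{−ak}) )
converges if and only if β > 3. -/
theorem stmt12 (a Λ β : ℝ) (ha : 0 < a) (hΛ : 0 < Λ) (hβ : 0 < β) :
    Summable (fun k : ℕ => if 2 ≤ k then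
      ((k : ℝ) * Λ * (2 * (k : ℝ) + 1) + 1) *
        ((∑ l ∈ Finset.Icc 1 (k - 1), Λ / (l : ℝ) ^ β) * (exp (-a * (k : ℝ)) * (exp a - 1))
          + Λ / (k : ℝ) ^ β * (1 - exp (-a * (k : ℝ))))
      else 0)
    ↔ 3 < β := by
  set f : ℕ → ℝ := (fun k : ℕ => if 2 ≤ k then
      ((k : ℝ) * Λ * (2 * (k : ℝ) + 1) + 1) *
        ((∑ l ∈ Finset.Icc 1 (k - 1), Λ / (l : ℝ) ^ β) * (exp (-a * (k : ℝ)) * (exp a - 1))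
          + Λ / (k : ℝ) ^ β * (1 - exp (-a * (k : ℝ))))
      else 0) with hf
  have hea : 0 < exp a - 1 := by
    have := Real.add_one_lt_exp (x := a) (by positivity)
    linarith
  constructor
  · -- Summable → 3 < β
    intro hs
    by_contra hβ3
    push_neg at hβ3  -- β ≤ 3
    set c : ℝ := 2 * Λ ^ 2 * (1 - exp (-(2 * a))) with hc
    have h2a : 0 < 1 - exp (-(2 * a)) := by
      have : exp (-(2 * a)) < 1 := by
        rw [Real.exp_lt_one_iff]; linarith
      linarith
    have hc0 : 0 < c := by positivity
    have hlow : ∀ k : ℕ, 2 ≤ k → c * (k : ℝ) ^ ((2 : ℝ) - β) ≤ f k := by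
      intro k hk
      have hK2 : (2 : ℝ) ≤ (k : ℝ) := by exact_mod_cast hk
      have hK0 : (0 : ℝ) < (k : ℝ) := by linarith
      have hrw : (k : ℝ) ^ ((2 : ℝ) - β) = (k : ℝ) ^ (2 : ℕ) / (k : ℝ) ^ β := by
        rw [Real.rpow_sub hK0, Real.rpow_two]
      have hkβ : 0 < (k : ℝ) ^ β := Real.rpow_pos_of_pos hK0 β
      simp only [hf, if_pos hk]
      have hexp : exp (-a * (k : ℝ)) ≤ exp (-(2 * a)) := by
        apply Real.exp_le_exp.mpr; nlinarith
      have hB : 0 ≤ (∑ l ∈ Finset.Icc 1 (k - 1), Λ / (l : ℝ) ^ β) *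
          (exp (-a * (k : ℝ)) * (exp a - 1)) := by
        apply mul_nonneg
        · apply Finset.sum_nonneg; intro l _; positivity
        · positivity
      have hC : Λ / (k : ℝ) ^ β * (1 - exp (-(2 * a))) ≤
          Λ / (k : ℝ) ^ β * (1 - exp (-a * (k : ℝ))) := by
        apply mul_le_mul_of_nonneg_left (by linarith) (by positivity)
      have hA : 2 * Λ * (k : ℝ) ^ 2 ≤ (k : ℝ) * Λ * (2 * (k : ℝ) + 1) + 1 := by nlinarith
      have hA0 : (0 : ℝ) < 2 * Λ * (k : ℝ) ^ 2 := by positivity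
      calc c * (k : ℝ) ^ ((2 : ℝ) - β)
          = (2 * Λ * (k : ℝ) ^ 2) * (Λ / (k : ℝ) ^ β * (1 - exp (-(2 * a)))) := by
            rw [hrw]; field_simp [hc]; ring
        _ ≤ ((k : ℝ) * Λ * (2 * (k : ℝ) + 1) + 1) *
            (Λ / (k : ℝ) ^ β * (1 - exp (-a * (k : ℝ)))) := by
            apply mul_le_mul hA hC _ (by nlinarith)
            exact mul_nonneg (by positivity) h2a.le
        _ ≤ ((k : ℝ) * Λ * (2 * (k : ℝ) + 1) + 1) *
            ((∑ l ∈ Finset.Icc 1 (k - 1), Λ / (l : ℝ) ^ β) *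
              (exp (-a * (k : ℝ)) * (exp a - 1))
              + Λ / (k : ℝ) ^ β * (1 - exp (-a * (k : ℝ)))) := by
            apply mul_le_mul_of_nonneg_left (by linarith) (by nlinarith)
    have hsum2 : Summable (fun k : ℕ => c * ((k + 2 : ℕ) : ℝ) ^ ((2 : ℝ) - β)) := by
      apply Summable.of_nonneg_of_le (fun k => by positivity)
        (fun k => hlow (k + 2) (by omega))
      exact (summable_nat_add_iff 2).mpr hs
    have hsum3 : Summable (fun k : ℕ => (k : ℝ) ^ ((2 : ℝ) - β)) := by
      have := (summable_nat_add_iff (f := fun k : ℕ => c * (k : ℝ) ^ ((2 : ℝ) - β)) 2).mp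
        (by exact_mod_cast hsum2)
      exact (summable_mul_left_iff hc0.ne').mp this
    have := summable_nat_rpow.mp hsum3
    linarith
  · -- 3 < β → Summable
    intro hβ3
    have hr1 : exp (-a) < 1 := by rw [Real.exp_lt_one_iff]; linarith
    have hsgeom : Summable (fun k : ℕ => (k : ℝ) ^ (3 : ℕ) * (exp (-a)) ^ k) := by
      apply summable_pow_mul_geometric_of_norm_lt_one
      rw [Real.norm_eq_abs, abs_of_pos (exp_pos _)]; exact hr1
    have hsrpow : Summable (fun k : ℕ => (k : ℝ) ^ ((2 : ℝ) - β)) :=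
      summable_nat_rpow.mpr (by linarith)
    set M₁ : ℝ := (3 * Λ + 1) * Λ * (exp a - 1) with hM₁
    set M₂ : ℝ := (3 * Λ + 1) * Λ with hM₂
    have hM₁0 : 0 < M₁ := by positivity
    have hM₂0 : 0 < M₂ := by positivity
    have hu : Summable (fun k : ℕ =>
        M₁ * ((k : ℝ) ^ (3 : ℕ) * (exp (-a)) ^ k) + M₂ * (k : ℝ) ^ ((2 : ℝ) - β)) :=
      (hsgeom.mul_left M₁).add (hsrpow.mul_left M₂)
    apply Summable.of_nonneg_of_le _ _ hu
    · intro k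
      by_cases hk : 2 ≤ k
      · simp only [hf, if_pos hk]
        have hK0 : (0 : ℝ) < (k : ℝ) := by positivity
        apply mul_nonneg
        · positivity
        · apply add_nonneg
          · apply mul_nonneg (Finset.sum_nonneg fun l _ => by positivity) (by positivity)
          · apply mul_nonneg (by positivity)
            have : exp (-a * (k : ℝ)) ≤ 1 := by
              rw [Real.exp_le_one_iff]; nlinarith
            linarith
      · simp [hf, hk]
    · intro k
      by_cases hk : 2 ≤ k
      · simp only [hf, if_pos hk]
        have hK2 : (2 : ℝ) ≤ (k : ℝ) := by exact_mod_cast hk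
        have hK0 : (0 : ℝ) < (k : ℝ) := by linarith
        have hkβ : 0 < (k : ℝ) ^ β := Real.rpow_pos_of_pos hK0 β
        have hexp0 : 0 < exp (-a * (k : ℝ)) := exp_pos _
        -- bound A
        have hA : ((k : ℝ) * Λ * (2 * (k : ℝ) + 1) + 1) ≤ (3 * Λ + 1) * (k : ℝ) ^ 2 := by
          have hkk : (k : ℝ) ≤ (k : ℝ) ^ 2 := by nlinarith
          have h1 : Λ * (k : ℝ) ≤ Λ * (k : ℝ) ^ 2 := mul_le_mul_of_nonneg_left hkk hΛ.le
          have h2 : (1 : ℝ) ≤ (k : ℝ) ^ 2 := by nlinarith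
          nlinarith
        -- bound B
        have hB : (∑ l ∈ Finset.Icc 1 (k - 1), Λ / (l : ℝ) ^ β) ≤ Λ * (k : ℝ) := by
          calc (∑ l ∈ Finset.Icc 1 (k - 1), Λ / (l : ℝ) ^ β)
              ≤ (Finset.Icc 1 (k - 1)).card • Λ := by
                apply Finset.sum_le_card_nsmul
                intro l hl
                have hl1 : 1 ≤ l := (Finset.mem_Icc.mp hl).1
                have hl1' : (1 : ℝ) ≤ (l : ℝ) := by exact_mod_cast hl1
                have : (1 : ℝ) ≤ (l : ℝ) ^ β := stmt12_aux_one_le_rpow hl1' hβ.le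
                calc Λ / (l : ℝ) ^ β ≤ Λ / 1 := by
                      apply div_le_div_of_nonneg_left hΛ.le one_pos this
                  _ = Λ := div_one Λ
            _ = ((k - 1 : ℕ) : ℝ) * Λ := by
                rw [Nat.card_Icc, nsmul_eq_mul]; norm_num
            _ ≤ Λ * (k : ℝ) := by
                have : ((k - 1 : ℕ) : ℝ) ≤ (k : ℝ) := by
                  exact_mod_cast Nat.sub_le k 1
                nlinarith
        -- bound C
        have hC : Λ / (k : ℝ) ^ β * (1 - exp (-a * (k : ℝ))) ≤ Λ / (k : ℝ) ^ β := by
          have : Λ / (k : ℝ) ^ β * (1 - exp (-a * (k : ℝ))) ≤ Λ / (k : ℝ) ^ β * 1 := by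
            apply mul_le_mul_of_nonneg_left (by linarith) (by positivity)
          simpa using this
        have hBpos : 0 ≤ exp (-a * (k : ℝ)) * (exp a - 1) := by positivity
        have hrw : M₂ * (k : ℝ) ^ ((2 : ℝ) - β) = (3 * Λ + 1) * (k : ℝ) ^ 2 * (Λ / (k : ℝ) ^ β) := by
          rw [Real.rpow_sub hK0, Real.rpow_two, hM₂]; field_simp
        have hrwexp : (exp (-a)) ^ k = exp (-a * (k : ℝ)) := by
          rw [← Real.exp_nat_mul]; ring_nf
        calc ((k : ℝ) * Λ * (2 * (k : ℝ) + 1) + 1) *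
              ((∑ l ∈ Finset.Icc 1 (k - 1), Λ / (l : ℝ) ^ β) * (exp (-a * (k : ℝ)) * (exp a - 1))
                + Λ / (k : ℝ) ^ β * (1 - exp (-a * (k : ℝ))))
            ≤ ((3 * Λ + 1) * (k : ℝ) ^ 2) *
              ((Λ * (k : ℝ)) * (exp (-a * (k : ℝ)) * (exp a - 1)) + Λ / (k : ℝ) ^ β) := by
              apply mul_le_mul hA _ _ (by positivity)
              · apply add_le_add _ hC
                exact mul_le_mul_of_nonneg_right hB hBpos
              · apply add_nonneg
                · apply mul_nonneg (Finset.sum_nonneg fun l _ => by positivity) hBpos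
                · apply mul_nonneg (by positivity)
                  have : exp (-a * (k : ℝ)) ≤ 1 := by
                    rw [Real.exp_le_one_iff]; nlinarith
                  linarith
          _ = M₁ * ((k : ℝ) ^ (3 : ℕ) * (exp (-a)) ^ k) + M₂ * (k : ℝ) ^ ((2 : ℝ) - β) := by
              rw [hrw, hrwexp, hM₁]; ring
      · simp only [hf, if_neg hk]
        have h1 : 0 ≤ M₁ * ((k : ℝ) ^ (3 : ℕ) * (exp (-a)) ^ k) := by positivity
        have h2 : 0 ≤ M₂ * (k : ℝ) ^ ((2 : ℝ) - β) := by positivity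
        linarith
end
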